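/- Let Ω be a complete separable metric space with its Borel σ-algebra, 𝒫 a nonempty set of Borel probability measures on Ω, and c(A) := sup_{P∈𝒫} P(A) the associated capacity. Let E be a real Banach space and p ≥ 1. Consider the Borel-measurable maps X : Ω → E with ⦀X⦀_p := sup_{P∈𝒫} (∫_Ω ‖X‖^p dP)^{1/p} < ∞, where two maps are identified when they agree quasi-surely, i.e. when c({X ≠ Y}) = 0. Then the closure with respect to ⦀·⦀_p of the set of bounded continuous maps Ω → E equals the set of all X with ⦀X⦀_p < ∞ such that (i) X has a quasi-continuous version, and (ii) lim_{n→∞} sup_{P∈𝒫} ∫_Ω ‖X‖^p · 1_{{‖X‖ > n}} dP = 0. -/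

import Mathlib

open MeasureTheory Filter
open scoped ENNReal NNReal Topology
open Metric
set_option linter.unusedSectionVars false
set_option linter.unusedVariables false
set_option maxHeartbeats 1000000

noncomputable section

variable {Ω : Type*} [MetricSpace Ω] [CompleteSpace Ω] [TopologicalSpace.SeparableSpace Ω]
  [MeasurableSpace Ω] [BorelSpace Ω]
variable {E : Type*} [NormedAddCommGroup E] [NormedSpace ℝ E] [CompleteSpace E]
  [MeasurableSpace E] [BorelSpace E]

/-- The Choquet capacity associated with a family `Ps` of probability measures:
`c(A) = sup_{P∈Ps} P(A)`. -/
def capacity (Ps : Set (Measure Ω)) (A : Set Ω) : ℝ≥0∞ :=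
  ⨆ P ∈ Ps, P A

/-- The norm `⦀X⦀_p = sup_{P∈Ps} (∫ ‖X‖^p dP)^{1/p}`, valued in `ℝ≥0∞`. -/
def supLpNorm (Ps : Set (Measure Ω)) (p : ℝ) (X : Ω → E) : ℝ≥0∞ :=
  ⨆ P ∈ Ps, (∫⁻ ω, (‖X ω‖₊ : ℝ≥0∞) ^ p ∂P) ^ (1 / p)

/-- `X` is quasi-continuous with respect to the capacity of `Ps`: for every `ε > 0` there is
an open set `O` with `c(O) < ε` such that the restriction of `X` to `Oᶜ` is continuous. -/
def QuasiContinuous (Ps : Set (Measure Ω)) (X : Ω → E) : Prop :=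
  ∀ ε : ℝ≥0∞, 0 < ε → ∃ O : Set Ω, IsOpen O ∧ capacity Ps O < ε ∧ ContinuousOn X Oᶜ

lemma ofReal_norm_eq_coe_nnnorm {F : Type*} [SeminormedAddCommGroup F] (a : F) :
    ENNReal.ofReal ‖a‖ = (‖a‖₊ : ℝ≥0∞) := ofReal_norm a

section Aux
variable {Ps : Set (Measure Ω)} {p : ℝ}

lemma measurable_norm_sub_of_continuous {X : Ω → E} (hX : Measurable X)
    {g : Ω → E} (hg : Continuous g) :
    Measurable fun ω => ‖X ω - g ω‖ := by
  classical
  rcases isEmpty_or_nonempty Ω with hΩ | hΩ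
  · exact measurable_of_empty _
  haveI : SecondCountableTopology Ω := UniformSpace.secondCountable_of_separable Ω
  obtain ⟨u, hu⟩ := TopologicalSpace.exists_dense_seq Ω
  have hex : ∀ (k : ℕ) (ω : Ω), ∃ i, dist ω (u i) < 1/(k+1 : ℝ) := by
    intro k ω
    have h1 : ω ∈ closure (Set.range u) := hu ω
    rw [Metric.mem_closure_range_iff] at h1
    exact h1 _ (by positivity)
  set κ : ℕ → Ω → ℕ := fun k ω => Nat.find (hex k ω) with hκ_def
  have hκmeas : ∀ k, Measurable (κ k) := by
    intro k
    refine measurable_to_countable' (fun i => ?_)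
    have : κ k ⁻¹' {i} = {ω | dist ω (u i) < 1/(k+1 : ℝ)}
        ∩ ⋂ j ∈ Set.Iio i, {ω | ¬ dist ω (u j) < 1/(k+1 : ℝ)} := by
      ext ω
      simp only [Set.mem_preimage, Set.mem_singleton_iff, hκ_def, Nat.find_eq_iff,
        Set.mem_inter_iff, Set.mem_setOf_eq, Set.mem_iInter, Set.mem_Iio]
    rw [this]
    refine MeasurableSet.inter ?_ (MeasurableSet.biInter (Set.to_countable _) (fun j _ => ?_))
    · exact measurableSet_lt (measurable_id.dist measurable_const) measurable_const
    · exact (measurableSet_lt (measurable_id.dist measurable_const) measurable_const).compl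
  have hfk : ∀ k, Measurable fun ω => ‖X ω - g (u (κ k ω))‖ := by
    intro k
    have h1 : Measurable fun q : E × ℕ => ‖q.1 - g (u q.2)‖ := by
      refine measurable_from_prod_countable_left (fun i => ?_)
      have hc : Continuous fun x : E => ‖x - g (u i)‖ :=
        (continuous_id.sub continuous_const).norm
      exact hc.measurable
    exact h1.comp (hX.prodMk (hκmeas k))
  refine measurable_of_tendsto_metrizable hfk (tendsto_pi_nhds.mpr (fun ω => ?_))
  have h1 : Tendsto (fun k => u (κ k ω)) atTop (𝓝 ω) := by
    rw [tendsto_iff_dist_tendsto_zero]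
    refine squeeze_zero (fun k => dist_nonneg) (fun k => ?_)
      tendsto_one_div_add_atTop_nhds_zero_nat
    rw [dist_comm]
    exact (Nat.find_spec (hex k ω)).le
  have h2 : Continuous fun x => ‖X ω - g x‖ := (continuous_const.sub hg).norm
  exact (h2.tendsto ω).comp h1

lemma lintegral_le_supLpNorm_rpow (hp : 0 < p) {P : Measure Ω} (hP : P ∈ Ps) (f : Ω → E) :
    ∫⁻ ω, (‖f ω‖₊ : ℝ≥0∞) ^ p ∂P ≤ (supLpNorm Ps p f) ^ p := by
  have h1 : (∫⁻ ω, (‖f ω‖₊ : ℝ≥0∞) ^ p ∂P) ^ (1 / p) ≤ supLpNorm Ps p f :=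
    le_iSup₂ (f := fun (P : Measure Ω) (_ : P ∈ Ps) =>
      (∫⁻ ω, (‖f ω‖₊ : ℝ≥0∞) ^ p ∂P) ^ (1 / p)) P hP
  calc ∫⁻ ω, (‖f ω‖₊ : ℝ≥0∞) ^ p ∂P
      = ((∫⁻ ω, (‖f ω‖₊ : ℝ≥0∞) ^ p ∂P) ^ (1 / p)) ^ p := by
        rw [← ENNReal.rpow_mul, one_div, inv_mul_cancel₀ hp.ne', ENNReal.rpow_one]
    _ ≤ (supLpNorm Ps p f) ^ p := ENNReal.rpow_le_rpow h1 hp.le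

lemma supLpNorm_le_add (hp : 1 ≤ p) {f g h : Ω → E}
    (hg : Measurable fun ω => ‖g ω‖) (hh : Measurable fun ω => ‖h ω‖)
    (htri : ∀ ω, ‖f ω‖₊ ≤ ‖g ω‖₊ + ‖h ω‖₊) :
    supLpNorm Ps p f ≤ supLpNorm Ps p g + supLpNorm Ps p h := by
  refine iSup₂_le fun P hP => ?_
  have hp0 : (0:ℝ) ≤ p := le_trans zero_le_one hp
  have hg' : Measurable fun ω => (‖g ω‖₊ : ℝ≥0∞) := by
    simp only [← ofReal_norm_eq_coe_nnnorm]
    exact ENNReal.measurable_ofReal.comp hg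
  have hh' : Measurable fun ω => (‖h ω‖₊ : ℝ≥0∞) := by
    simp only [← ofReal_norm_eq_coe_nnnorm]
    exact ENNReal.measurable_ofReal.comp hh
  have step1 : (∫⁻ ω, (‖f ω‖₊ : ℝ≥0∞) ^ p ∂P) ^ (1 / p)
      ≤ (∫⁻ ω, ((fun x => (‖g x‖₊ : ℝ≥0∞)) + fun x => (‖h x‖₊ : ℝ≥0∞)) ω ^ p ∂P) ^ (1 / p) := by
    refine ENNReal.rpow_le_rpow (lintegral_mono fun ω => ?_) (by positivity)
    refine ENNReal.rpow_le_rpow ?_ hp0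
    simpa [← ENNReal.coe_add] using ENNReal.coe_le_coe.mpr (htri ω)
  refine step1.trans ?_
  refine le_trans (ENNReal.lintegral_Lp_add_le hg'.aemeasurable
    hh'.aemeasurable hp) ?_
  exact add_le_add
    (le_iSup₂ (f := fun (P : Measure Ω) (_ : P ∈ Ps) =>
      (∫⁻ ω, (‖g ω‖₊ : ℝ≥0∞) ^ p ∂P) ^ (1 / p)) P hP)
    (le_iSup₂ (f := fun (P : Measure Ω) (_ : P ∈ Ps) =>
      (∫⁻ ω, (‖h ω‖₊ : ℝ≥0∞) ^ p ∂P) ^ (1 / p)) P hP)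

lemma meas_lt_le_supLpNorm_div_rpow (hp : 0 < p) {P : Measure Ω} (hP : P ∈ Ps)
    {f : Ω → E} (hf : Measurable fun ω => ‖f ω‖) {t : ℝ} (ht : 0 < t) :
    P {ω | t < ‖f ω‖} ≤ (supLpNorm Ps p f / ENNReal.ofReal t) ^ p := by
  have hsub : {ω | t < ‖f ω‖} ⊆ {ω | ENNReal.ofReal t ^ p ≤ (‖f ω‖₊ : ℝ≥0∞) ^ p} := by
    intro ω hω
    have : ENNReal.ofReal t ≤ (‖f ω‖₊ : ℝ≥0∞) := by
      rw [← ofReal_norm_eq_coe_nnnorm]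
      exact ENNReal.ofReal_le_ofReal (le_of_lt hω)
    exact ENNReal.rpow_le_rpow this hp.le
  have hf' : Measurable fun ω => (‖f ω‖₊ : ℝ≥0∞) := by
    simp only [← ofReal_norm_eq_coe_nnnorm]
    exact ENNReal.measurable_ofReal.comp hf
  have hmark := mul_meas_ge_le_lintegral₀ (μ := P)
    (hf'.pow_const p).aemeasurable (ENNReal.ofReal t ^ p)
  have h2 : ENNReal.ofReal t ^ p * P {ω | t < ‖f ω‖} ≤ (supLpNorm Ps p f) ^ p := by
    calc ENNReal.ofReal t ^ p * P {ω | t < ‖f ω‖}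
        ≤ ENNReal.ofReal t ^ p * P {ω | ENNReal.ofReal t ^ p ≤ (‖f ω‖₊ : ℝ≥0∞) ^ p} := by
          exact mul_le_mul_right (measure_mono hsub) _
      _ ≤ ∫⁻ ω, (‖f ω‖₊ : ℝ≥0∞) ^ p ∂P := hmark
      _ ≤ (supLpNorm Ps p f) ^ p := lintegral_le_supLpNorm_rpow hp hP f
  have ht0 : ENNReal.ofReal t ≠ 0 := by simp [ht, ENNReal.ofReal_eq_zero, not_le]
  have htp0 : ENNReal.ofReal t ^ p ≠ 0 := by
    simpa using (ENNReal.rpow_pos (by positivity) ENNReal.ofReal_ne_top).ne'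
  have htpt : ENNReal.ofReal t ^ p ≠ ∞ := ENNReal.rpow_ne_top_of_nonneg hp.le ENNReal.ofReal_ne_top
  rw [ENNReal.div_rpow_of_nonneg _ _ hp.le]
  rw [ENNReal.le_div_iff_mul_le (Or.inl htp0) (Or.inl htpt)]
  rwa [mul_comm]

lemma lp_bounded_le (hp : 0 < p) {P : Measure Ω} [IsProbabilityMeasure P]
    {f : Ω → E} {C : ℝ} (hC : ∀ ω, ‖f ω‖ ≤ C) :
    (∫⁻ ω, (‖f ω‖₊ : ℝ≥0∞) ^ p ∂P) ^ (1 / p) ≤ ENNReal.ofReal C := by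
  have h1 : ∫⁻ ω, (‖f ω‖₊ : ℝ≥0∞) ^ p ∂P ≤ ENNReal.ofReal C ^ p := by
    calc ∫⁻ ω, (‖f ω‖₊ : ℝ≥0∞) ^ p ∂P ≤ ∫⁻ _, ENNReal.ofReal C ^ p ∂P := by
          refine lintegral_mono fun ω => ?_
          refine ENNReal.rpow_le_rpow ?_ hp.le
          rw [← ofReal_norm_eq_coe_nnnorm]
          exact ENNReal.ofReal_le_ofReal (hC ω)
      _ = ENNReal.ofReal C ^ p := by simp
  calc (∫⁻ ω, (‖f ω‖₊ : ℝ≥0∞) ^ p ∂P) ^ (1 / p) ≤ (ENNReal.ofReal C ^ p) ^ (1 / p) :=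
        ENNReal.rpow_le_rpow h1 (by positivity)
    _ = ENNReal.ofReal C := by
        rw [← ENNReal.rpow_mul, mul_one_div, div_self hp.ne', ENNReal.rpow_one]

end Aux

/-- Dugundji-style extension of a bounded continuous map on a closed subset of a
separable metric space, with the same bound. -/
lemma exists_bounded_extension {C : Set Ω} (hC : IsClosed C) (hCne : C.Nonempty)
    (W : Ω → E) (hW : ContinuousOn W C) {n : ℝ} (hn : 0 < n) (hWb : ∀ ω, ‖W ω‖ ≤ n) :
    ∃ g : Ω → E, Continuous g ∧ (∀ ω, ‖g ω‖ ≤ n) ∧ ∀ ω ∈ C, g ω = W ω := by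
  classical
  haveI : SecondCountableTopology Ω :=
    UniformSpace.secondCountable_of_separable Ω
  haveI : Nonempty C := hCne.to_subtype
  obtain ⟨u', hu'⟩ := TopologicalSpace.exists_dense_seq C
  set u : ℕ → Ω := fun k => (u' k : Ω) with hu_def
  have huC : ∀ k, u k ∈ C := fun k => (u' k).2
  have hudense : ∀ c ∈ C, ∀ ε : ℝ, 0 < ε → ∃ k, dist c (u k) < ε := by
    intro c hc ε hε
    have : (⟨c, hc⟩ : C) ∈ closure (Set.range u') := hu' _
    rw [Metric.mem_closure_range_iff] at this
    obtain ⟨k, hk⟩ := this ε hε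
    exact ⟨k, by simpa [Subtype.dist_eq] using hk⟩
  set D : Ω → ℝ := fun x => infDist x C with hD_def
  have hDcont : Continuous D := continuous_infDist_pt C
  have hDnonneg : ∀ x, 0 ≤ D x := fun x => infDist_nonneg
  have hDpos : ∀ x ∉ C, 0 < D x := fun x hx => (hC.notMem_iff_infDist_pos hCne).mp hx
  have hDle : ∀ x, ∀ c ∈ C, D x ≤ dist x c := fun x c hc => infDist_le_dist_of_mem hc
  set φ : ℕ → Ω → ℝ := fun k x => min 1 (max 0 (2 * D x - dist x (u k))) with hφ_def
  have hφcont : ∀ k, Continuous (φ k) := by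
    intro k
    apply continuous_const.min
    exact continuous_const.max ((continuous_const.mul hDcont).sub
      (continuous_id.dist continuous_const))
  have hφ0 : ∀ k x, 0 ≤ φ k x := fun k x => le_min zero_le_one (le_max_left _ _)
  have hφ1 : ∀ k x, φ k x ≤ 1 := fun k x => min_le_left _ _
  have hφsupp : ∀ k x, 0 < φ k x → dist x (u k) < 2 * D x := by
    intro k x h
    by_contra hcon
    push_neg at hcon
    have hmax : max 0 (2 * D x - dist x (u k)) = 0 := max_eq_left (by linarith)
    simp only [hφ_def, hmax] at h
    simp at h
  have hφpos : ∀ x ∉ C, ∃ k, 0 < φ k x := by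
    intro x hx
    have hDx := hDpos x hx
    obtain ⟨c, hc, hxc⟩ := (infDist_lt_iff hCne).mp (show D x < (3/2) * D x by linarith)
    obtain ⟨k, hk⟩ := hudense c hc (D x / 4) (by linarith)
    refine ⟨k, ?_⟩
    have hdist : dist x (u k) ≤ dist x c + dist c (u k) := dist_triangle _ _ _
    have h2 : 0 < 2 * D x - dist x (u k) := by linarith
    exact lt_min one_pos (lt_of_lt_of_le h2 (le_max_right _ _))
  set w : ℕ → Ω → ℝ := fun k x => (1/2 : ℝ)^k * φ k x with hw_def
  have hw0 : ∀ k x, 0 ≤ w k x := fun k x => mul_nonneg (by positivity) (hφ0 k x)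
  have hwle : ∀ k x, w k x ≤ (1/2 : ℝ)^k := by
    intro k x
    calc w k x ≤ (1/2:ℝ)^k * 1 := mul_le_mul_of_nonneg_left (hφ1 k x) (by positivity)
      _ = (1/2:ℝ)^k := mul_one _
  have hwcont : ∀ k, Continuous (w k) := fun k => continuous_const.mul (hφcont k)
  have hwsum : ∀ x, Summable (fun k => w k x) := fun x =>
    Summable.of_nonneg_of_le (fun k => hw0 k x) (fun k => hwle k x) summable_geometric_two
  set S : Ω → ℝ := fun x => ∑' k, w k x with hS_def
  have hScont : Continuous S := by
    refine continuous_tsum hwcont summable_geometric_two (fun k x => ?_)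
    rw [Real.norm_eq_abs, abs_of_nonneg (hw0 k x)]
    exact hwle k x
  have hSpos : ∀ x ∉ C, 0 < S x := by
    intro x hx
    obtain ⟨k, hk⟩ := hφpos x hx
    have hwpos : 0 < w k x := mul_pos (by positivity) hk
    refine lt_of_lt_of_le hwpos ?_
    exact Summable.le_tsum (hwsum x) k (fun j _ => hw0 j x)
  have hNsummable : ∀ x, Summable (fun k => w k x • W (u k)) := by
    intro x
    refine Summable.of_norm_bounded
      (summable_geometric_two.mul_right n) (fun k => ?_)
    rw [norm_smul, Real.norm_eq_abs, abs_of_nonneg (hw0 k x)]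
    exact mul_le_mul (hwle k x) (hWb _) (norm_nonneg _) (by positivity)
  set N : Ω → E := fun x => ∑' k, w k x • W (u k) with hN_def
  have hNcont : Continuous N := by
    refine continuous_tsum (fun k => (hwcont k).smul continuous_const)
      (summable_geometric_two.mul_right n) (fun k x => ?_)
    rw [norm_smul, Real.norm_eq_abs, abs_of_nonneg (hw0 k x)]
    exact mul_le_mul (hwle k x) (hWb _) (norm_nonneg _) (by positivity)
  set g : Ω → E := fun x => if x ∈ C then W x else (S x)⁻¹ • N x with hg_def
  have hgC : ∀ ω ∈ C, g ω = W ω := fun ω hω => if_pos hω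
  have hNle : ∀ x, ‖N x‖ ≤ S x * n := by
    intro x
    have hns : Summable (fun k => ‖w k x • W (u k)‖) := by
      refine Summable.of_nonneg_of_le (fun k => norm_nonneg _) (fun k => ?_)
        (summable_geometric_two.mul_right n)
      rw [norm_smul, Real.norm_eq_abs, abs_of_nonneg (hw0 k x)]
      exact mul_le_mul (hwle k x) (hWb _) (norm_nonneg _) (by positivity)
    have h1 : ‖N x‖ ≤ ∑' k, ‖w k x • W (u k)‖ := norm_tsum_le_tsum_norm hns
    refine h1.trans ?_
    rw [hS_def]
    rw [← tsum_mul_right]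
    refine Summable.tsum_le_tsum (fun k => ?_) hns ((hwsum x).mul_right n)
    rw [norm_smul, Real.norm_eq_abs, abs_of_nonneg (hw0 k x)]
    exact mul_le_mul_of_nonneg_left (hWb _) (hw0 k x)
  have hgb : ∀ x, ‖g x‖ ≤ n := by
    intro x
    by_cases hxC : x ∈ C
    · rw [hgC x hxC]; exact hWb x
    · have hSx := hSpos x hxC
      rw [hg_def]
      simp only [if_neg hxC]
      rw [norm_smul, Real.norm_eq_abs, abs_of_nonneg (inv_nonneg.mpr hSx.le)]
      calc (S x)⁻¹ * ‖N x‖ ≤ (S x)⁻¹ * (S x * n) :=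
            mul_le_mul_of_nonneg_left (hNle x) (inv_nonneg.mpr hSx.le)
        _ = n := by field_simp
  have hkey : ∀ c ∈ C, ∀ ε : ℝ, 0 < ε → ∃ δ : ℝ, 0 < δ ∧
      ∀ x, dist x c < δ → ‖g x - W c‖ ≤ ε := by
    intro c hc ε hε
    have hWc : ContinuousWithinAt W C c := hW c hc
    rw [Metric.continuousWithinAt_iff] at hWc
    obtain ⟨δ, hδpos, hδ⟩ := hWc ε hε
    refine ⟨δ/3, by linarith, fun x hx => ?_⟩
    by_cases hxC : x ∈ C
    · have hd : dist x c < δ := by linarith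
      have := hδ hxC hd
      rw [hgC x hxC, ← dist_eq_norm]
      exact this.le
    · have hSx := hSpos x hxC
      have hterm : ∀ k, ‖w k x • (W (u k) - W c)‖ ≤ w k x * ε := by
        intro k
        rcases eq_or_lt_of_le (hw0 k x) with h0 | hpos
        · rw [← h0]; simp
        · have hφk : 0 < φ k x := by
            by_contra hφ'
            push_neg at hφ'
            have : φ k x = 0 := le_antisymm hφ' (hφ0 k x)
            rw [hw_def] at hpos
            simp only [this, mul_zero] at hpos
            exact lt_irrefl _ hpos
          have h1 : dist x (u k) < 2 * D x := hφsupp k x hφk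
          have h2 : D x ≤ dist x c := hDle x c hc
          have hdc : 0 ≤ dist x c := dist_nonneg
          have h3 : dist (u k) c < δ := by
            have := dist_triangle (u k) x c
            rw [dist_comm (u k) x] at this
            linarith
          have h4 : ‖W (u k) - W c‖ ≤ ε := by
            rw [← dist_eq_norm]
            exact (hδ (huC k) h3).le
          rw [norm_smul, Real.norm_eq_abs, abs_of_nonneg (hw0 k x)]
          exact mul_le_mul_of_nonneg_left h4 (hw0 k x)
      have hsub_summable : Summable (fun k => w k x • (W (u k) - W c)) := by
        refine Summable.of_norm_bounded ((hwsum x).mul_right ε) hterm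
      have hNS : N x - S x • W c = ∑' k, w k x • (W (u k) - W c) := by
        rw [hN_def, hS_def, ← Summable.tsum_smul_const (hwsum x)]
        rw [← Summable.tsum_sub (hNsummable x) ((hwsum x).smul_const (W c))]
        congr 1
        funext k
        rw [smul_sub]
      have hgx : g x - W c = (S x)⁻¹ • (N x - S x • W c) := by
        rw [hg_def]
        simp only [if_neg hxC]
        rw [smul_sub, smul_smul, inv_mul_cancel₀ hSx.ne', one_smul]
      rw [hgx, hNS]
      rw [norm_smul, Real.norm_eq_abs, abs_of_nonneg (inv_nonneg.mpr hSx.le)]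
      have hsubn : Summable (fun k => ‖w k x • (W (u k) - W c)‖) :=
        Summable.of_nonneg_of_le (fun k => norm_nonneg _) hterm ((hwsum x).mul_right ε)
      have hnorm_sum : ‖∑' k, w k x • (W (u k) - W c)‖ ≤ S x * ε := by
        refine le_trans (norm_tsum_le_tsum_norm hsubn) ?_
        rw [hS_def, ← tsum_mul_right]
        exact Summable.tsum_le_tsum hterm hsubn ((hwsum x).mul_right ε)
      calc (S x)⁻¹ * ‖∑' k, w k x • (W (u k) - W c)‖ ≤ (S x)⁻¹ * (S x * ε) :=
            mul_le_mul_of_nonneg_left hnorm_sum (inv_nonneg.mpr hSx.le)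
        _ = ε := by field_simp
  have hgcont : Continuous g := by
    rw [continuous_iff_continuousAt]
    intro x
    by_cases hxC : x ∈ C
    · rw [Metric.continuousAt_iff]
      intro ε hε
      obtain ⟨δ, hδpos, h⟩ := hkey x hxC (ε/2) (by linarith)
      refine ⟨δ, hδpos, fun {y} hy => ?_⟩
      have := h y hy
      rw [hgC x hxC]
      rw [dist_eq_norm]
      calc ‖g y - W x‖ ≤ ε/2 := this
        _ < ε := by linarith
    · have hca : ContinuousAt (fun y => (S y)⁻¹ • N y) x :=
        (hScont.continuousAt.inv₀ (hSpos x hxC).ne').smul hNcont.continuousAt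
      refine hca.congr ?_
      refine Filter.eventuallyEq_of_mem (hC.isOpen_compl.mem_nhds hxC) (fun y hy => ?_)
      simp only [hg_def, if_neg hy]
  exact ⟨g, hgcont, hgb, hgC⟩



/-- over a complete separable metric space `Ω` with a nonempty family `Ps` of
Borel probability measures, for `p ≥ 1` the closure, in the norm `⦀·⦀_p` (and up to
quasi-sure identification), of the bounded continuous maps `Ω → E` consists exactly of
those Borel maps `X` with `⦀X⦀_p < ∞` which (i) have a quasi-continuous version and
(ii) satisfy `lim_n sup_{P∈Ps} ∫ ‖X‖^p·1_{‖X‖>n} dP = 0`. -/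
theorem closure_of_bounded_continuous_eq_quasiContinuous_uniformly_integrable
    (Ps : Set (Measure Ω)) (hPsne : Ps.Nonempty)
    (hPsprob : ∀ P ∈ Ps, IsProbabilityMeasure P)
    (p : ℝ) (hp : 1 ≤ p)
    (X : Ω → E) (hX : Measurable X) :
    (∃ Y : ℕ → Ω → E,
        (∀ n, Continuous (Y n)) ∧
        (∀ n, ∃ Cb : ℝ, ∀ ω, ‖Y n ω‖ ≤ Cb) ∧
        Tendsto (fun n => supLpNorm Ps p (fun ω => X ω - Y n ω)) atTop (𝓝 0)) ↔
      (supLpNorm Ps p X < ∞ ∧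
        (∃ Z : Ω → E, QuasiContinuous Ps Z ∧ capacity Ps {ω | X ω ≠ Z ω} = 0) ∧
        Tendsto
          (fun n : ℕ => ⨆ P ∈ Ps,
            ∫⁻ ω in {ω | (n : ℝ) < ‖X ω‖}, (‖X ω‖₊ : ℝ≥0∞) ^ p ∂P)
          atTop (𝓝 0)) := by
  have hp0 : (0:ℝ) < p := lt_of_lt_of_le zero_lt_one hp
  constructor
  · rintro ⟨Y, hYc, hYb, hYlim⟩
    have hp0' : p ≠ 0 := hp0.ne'
    have h2top : ((2:ℝ≥0∞) ^ p) ≠ ⊤ := ENNReal.rpow_ne_top_of_nonneg hp0.le (by norm_num)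
    obtain ⟨P₀, hP₀⟩ := hPsne
    haveI := hPsprob P₀ hP₀
    have hΩne : Nonempty Ω := by
      by_contra h
      rw [not_nonempty_iff] at h
      have h1 : (P₀ : Measure Ω) Set.univ = 1 := measure_univ
      rw [Set.univ_eq_empty_iff.mpr h] at h1
      simp at h1
    classical
    have hhalfpos : (0:ℝ≥0∞) < 2⁻¹ := by simp [ENNReal.inv_pos]
    have hhalflt1 : (2⁻¹ : ℝ≥0∞) < 1 := ENNReal.inv_lt_one.mpr ENNReal.one_lt_two
    have hofReal : ∀ k : ℕ, ENNReal.ofReal ((2⁻¹:ℝ)^k) = (2⁻¹:ℝ≥0∞)^k := by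
      intro k
      rw [ENNReal.ofReal_pow (by norm_num : (0:ℝ) ≤ 2⁻¹)]
      congr 1
      rw [ENNReal.ofReal_inv_of_pos (by norm_num)]
      norm_num
    have hple : ∀ x : ℝ≥0∞, x ≤ 1 → x ^ p ≤ x := by
      intro x hx
      calc x ^ p ≤ x ^ (1:ℝ) := ENNReal.rpow_le_rpow_of_exponent_ge hx hp
        _ = x := ENNReal.rpow_one x
    -- select a rapidly converging subsequence
    have hsel : ∀ k : ℕ, ∃ j, supLpNorm Ps p (fun ω => X ω - Y j ω) < (2⁻¹:ℝ≥0∞) ^ (2*k) :=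
      fun k => (hYlim.eventually_lt_const (ENNReal.pow_pos hhalfpos _)).exists
    set n : ℕ → ℕ := fun k => (hsel k).choose with hn_def
    have hn : ∀ k, supLpNorm Ps p (fun ω => X ω - Y (n k) ω) ≤ (2⁻¹:ℝ≥0∞) ^ (2*k) :=
      fun k => ((hsel k).choose_spec).le
    refine ⟨?_, ?_, ?_⟩
    · -- finiteness of the norm
      obtain ⟨C, hC⟩ := hYb (n 0)
      have htri : supLpNorm Ps p X
          ≤ supLpNorm Ps p (fun ω => X ω - Y (n 0) ω) + supLpNorm Ps p (Y (n 0)) := by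
        refine supLpNorm_le_add hp (measurable_norm_sub_of_continuous hX (hYc (n 0)))
          ((hYc (n 0)).norm.measurable) (fun ω => ?_)
        calc ‖X ω‖₊ = ‖(X ω - Y (n 0) ω) + Y (n 0) ω‖₊ := by rw [sub_add_cancel]
          _ ≤ ‖X ω - Y (n 0) ω‖₊ + ‖Y (n 0) ω‖₊ := nnnorm_add_le _ _
      have hb : supLpNorm Ps p (Y (n 0)) ≤ ENNReal.ofReal C := by
        refine iSup₂_le fun P hP => ?_
        haveI := hPsprob P hP
        exact lp_bounded_le hp0 hC
      refine lt_of_le_of_lt htri (ENNReal.add_lt_top.mpr ⟨?_, ?_⟩)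
      · calc supLpNorm Ps p (fun ω => X ω - Y (n 0) ω) ≤ (2⁻¹:ℝ≥0∞) ^ (2*0) := hn 0
          _ < ⊤ := by simp
      · exact lt_of_le_of_lt hb ENNReal.ofReal_lt_top
    · -- quasi-continuous version
      set O : ℕ → Set Ω := fun k =>
        {ω | (2⁻¹:ℝ)^k < ‖Y (n k) ω - Y (n (k+1)) ω‖} with hO_def
      have hOopen : ∀ k, IsOpen (O k) :=
        fun k => isOpen_lt continuous_const ((hYc (n k)).sub (hYc (n (k+1)))).norm
      have hdiff_bound : ∀ k, supLpNorm Ps p (fun ω => Y (n k) ω - Y (n (k+1)) ω)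
          ≤ 2 * (2⁻¹:ℝ≥0∞)^(2*k) := by
        intro k
        have htri : supLpNorm Ps p (fun ω => Y (n k) ω - Y (n (k+1)) ω)
            ≤ supLpNorm Ps p (fun ω => X ω - Y (n k) ω)
              + supLpNorm Ps p (fun ω => X ω - Y (n (k+1)) ω) := by
          refine supLpNorm_le_add hp (measurable_norm_sub_of_continuous hX (hYc (n k)))
            (measurable_norm_sub_of_continuous hX (hYc (n (k+1)))) (fun ω => ?_)
          have heq : Y (n k) ω - Y (n (k+1)) ω
              = (X ω - Y (n (k+1)) ω) - (X ω - Y (n k) ω) := by abel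
          calc ‖Y (n k) ω - Y (n (k+1)) ω‖₊
              = ‖(X ω - Y (n (k+1)) ω) - (X ω - Y (n k) ω)‖₊ := by rw [heq]
            _ ≤ ‖X ω - Y (n (k+1)) ω‖₊ + ‖X ω - Y (n k) ω‖₊ := nnnorm_sub_le _ _
            _ = ‖X ω - Y (n k) ω‖₊ + ‖X ω - Y (n (k+1)) ω‖₊ := add_comm _ _
        refine htri.trans ?_
        have h1 : (2⁻¹:ℝ≥0∞)^(2*(k+1)) ≤ (2⁻¹:ℝ≥0∞)^(2*k) :=
          pow_le_pow_right_of_le_one' hhalflt1.le (by omega)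
        calc supLpNorm Ps p (fun ω => X ω - Y (n k) ω)
              + supLpNorm Ps p (fun ω => X ω - Y (n (k+1)) ω)
            ≤ (2⁻¹:ℝ≥0∞)^(2*k) + (2⁻¹:ℝ≥0∞)^(2*(k+1)) := add_le_add (hn k) (hn (k+1))
          _ ≤ (2⁻¹:ℝ≥0∞)^(2*k) + (2⁻¹:ℝ≥0∞)^(2*k) := add_le_add le_rfl h1
          _ = 2 * (2⁻¹:ℝ≥0∞)^(2*k) := (two_mul _).symm
      have hOcapk : ∀ k, ∀ P ∈ Ps, P (O k) ≤ (2 * (2⁻¹:ℝ≥0∞)^k) ^ p := by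
        intro k P hP
        have h1 := meas_lt_le_supLpNorm_div_rpow hp0 hP
          (f := fun ω => Y (n k) ω - Y (n (k+1)) ω)
          (((hYc (n k)).sub (hYc (n (k+1)))).norm.measurable)
          (t := (2⁻¹:ℝ)^k) (pow_pos (by norm_num) k)
        refine le_trans h1 (ENNReal.rpow_le_rpow ?_ hp0.le)
        rw [hofReal k]
        refine ENNReal.div_le_of_le_mul ?_
        calc supLpNorm Ps p (fun ω => Y (n k) ω - Y (n (k+1)) ω)
            ≤ 2 * (2⁻¹:ℝ≥0∞)^(2*k) := hdiff_bound k
          _ = 2 * (2⁻¹:ℝ≥0∞)^k * (2⁻¹:ℝ≥0∞)^k := by rw [two_mul k, pow_add]; ring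
      set G : ℕ → Set Ω := fun m => ⋃ i, O (m + i) with hG_def
      have hGopen : ∀ m, IsOpen (G m) := fun m => isOpen_iUnion (fun i => hOopen _)
      have hGcap : ∀ m, 1 ≤ m → capacity Ps (G m) ≤ 4 * (2⁻¹:ℝ≥0∞)^m := by
        intro m hm
        refine iSup₂_le fun P hP => ?_
        calc P (G m) ≤ ∑' i, P (O (m+i)) := measure_iUnion_le _
          _ ≤ ∑' i, 2 * (2⁻¹:ℝ≥0∞)^m * (2⁻¹:ℝ≥0∞)^i := by
              refine ENNReal.tsum_le_tsum (fun i => ?_)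
              have hb1 : 2 * (2⁻¹:ℝ≥0∞)^(m+i) ≤ 1 := by
                calc 2 * (2⁻¹:ℝ≥0∞)^(m+i) ≤ 2 * (2⁻¹:ℝ≥0∞)^1 := by
                      exact mul_le_mul_right (pow_le_pow_right_of_le_one' hhalflt1.le (by omega)) _
                  _ = 1 := by
                      rw [pow_one]
                      exact ENNReal.mul_inv_cancel (by norm_num) (by norm_num)
              calc P (O (m+i)) ≤ (2 * (2⁻¹:ℝ≥0∞)^(m+i)) ^ p := hOcapk (m+i) P hP
                _ ≤ 2 * (2⁻¹:ℝ≥0∞)^(m+i) := hple _ hb1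
                _ = 2 * (2⁻¹:ℝ≥0∞)^m * (2⁻¹:ℝ≥0∞)^i := by rw [pow_add]; ring
          _ = 2 * (2⁻¹:ℝ≥0∞)^m * ∑' i, (2⁻¹:ℝ≥0∞)^i := ENNReal.tsum_mul_left
          _ = 4 * (2⁻¹:ℝ≥0∞)^m := by
              rw [ENNReal.tsum_geometric, ENNReal.one_sub_inv_two, inv_inv]
              ring
      have hoff : ∀ m ω, ω ∉ G m → ∀ i,
          dist (Y (n (m+i)) ω) (Y (n (m+i+1)) ω) ≤ (2⁻¹:ℝ)^(m+i) := by
        intro m ω hω i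
        have h1 : ω ∉ O (m+i) := fun h => hω (Set.mem_iUnion.mpr ⟨i, h⟩)
        rw [hO_def] at h1
        simp only [Set.mem_setOf_eq, not_lt] at h1
        rw [dist_eq_norm]
        exact h1
      set Z : Ω → E := fun ω =>
        if h : ∃ l, Tendsto (fun k => Y (n k) ω) atTop (𝓝 l) then h.choose else 0 with hZ_def
      have hZ : ∀ ω l, Tendsto (fun k => Y (n k) ω) atTop (𝓝 l) → Z ω = l := by
        intro ω l hl
        rw [hZ_def]
        have hex : ∃ l, Tendsto (fun k => Y (n k) ω) atTop (𝓝 l) := ⟨l, hl⟩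
        simp only [dif_pos hex]
        exact tendsto_nhds_unique hex.choose_spec hl
      have hconv : ∀ m ω, ω ∉ G m → Tendsto (fun k => Y (n k) ω) atTop (𝓝 (Z ω)) := by
        intro m ω hω
        have hcauchy : CauchySeq (fun i => Y (n (i + m)) ω) := by
          refine cauchySeq_of_le_geometric 2⁻¹ ((2⁻¹:ℝ)^m) (by norm_num) (fun i => ?_)
          have h1 := hoff m ω hω i
          have e1 : m + i = i + m := by omega
          have e2 : m + i + 1 = i + 1 + m := by omega
          rw [e2, e1] at h1
          calc dist (Y (n (i + m)) ω) (Y (n (i + 1 + m)) ω) ≤ (2⁻¹:ℝ)^(i+m) := h1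
            _ = (2⁻¹:ℝ)^m * (2⁻¹:ℝ)^i := by rw [pow_add]; ring
        obtain ⟨l, hl⟩ := cauchySeq_tendsto_of_complete hcauchy
        have hl' : Tendsto (fun k => Y (n k) ω) atTop (𝓝 l) :=
          (tendsto_add_atTop_iff_nat m).mp hl
        rw [hZ ω l hl']
        exact hl'
      have hrate : ∀ m ω, ω ∉ G m → ∀ k, m ≤ k →
          dist (Y (n k) ω) (Z ω) ≤ 2 * (2⁻¹:ℝ)^k := by
        intro m ω hω k hk
        have hv : ∀ i, dist (Y (n (i + k)) ω) (Y (n (i + 1 + k)) ω)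
            ≤ (2⁻¹:ℝ)^k * (2⁻¹:ℝ)^i := by
          intro i
          obtain ⟨j, hj⟩ : ∃ j, k + i = m + j := ⟨k + i - m, by omega⟩
          have h1 := hoff m ω hω j
          have e1 : m + j = i + k := by omega
          have e2 : m + j + 1 = i + 1 + k := by omega
          rw [e2, e1] at h1
          calc dist (Y (n (i + k)) ω) (Y (n (i + 1 + k)) ω) ≤ (2⁻¹:ℝ)^(i+k) := h1
            _ = (2⁻¹:ℝ)^k * (2⁻¹:ℝ)^i := by rw [pow_add]; ring
        have htd : Tendsto (fun i => Y (n (i + k)) ω) atTop (𝓝 (Z ω)) :=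
          (tendsto_add_atTop_iff_nat k).mpr (hconv m ω hω)
        have h2 := dist_le_of_le_geometric_of_tendsto₀ 2⁻¹ ((2⁻¹:ℝ)^k)
          (by norm_num : (2⁻¹:ℝ) < 1) hv htd
        simp only [zero_add] at h2
        calc dist (Y (n k) ω) (Z ω) ≤ (2⁻¹:ℝ)^k / (1 - 2⁻¹) := h2
          _ = 2 * (2⁻¹:ℝ)^k := by
              rw [show (1 - 2⁻¹ : ℝ) = 2⁻¹ by norm_num, div_eq_mul_inv, inv_inv]
              ring
      refine ⟨Z, ?_, ?_⟩
      · -- quasi-continuity of Z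
        intro ε hε
        have hGtend : Tendsto (fun m : ℕ => 4 * (2⁻¹:ℝ≥0∞)^m) atTop (𝓝 0) := by
          have h1 : Tendsto (fun m : ℕ => (2⁻¹:ℝ≥0∞)^m) atTop (𝓝 0) :=
            ENNReal.tendsto_pow_atTop_nhds_zero_of_lt_one hhalflt1
          have h2 := ENNReal.Tendsto.const_mul h1 (Or.inr (by norm_num : (4:ℝ≥0∞) ≠ ⊤))
          simpa using h2
        obtain ⟨m, hmlt, hm1⟩ :=
          ((hGtend.eventually_lt_const hε).and (eventually_ge_atTop 1)).exists
        refine ⟨G m, hGopen m, lt_of_le_of_lt (hGcap m hm1) hmlt, ?_⟩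
        have hunif : TendstoUniformlyOn (fun k => Y (n k)) Z atTop (G m)ᶜ := by
          rw [Metric.tendstoUniformlyOn_iff]
          intro ε' hε'
          have h2 : Tendsto (fun k : ℕ => 2 * (2⁻¹:ℝ)^k) atTop (𝓝 0) := by
            have h3 : Tendsto (fun k : ℕ => (2⁻¹:ℝ)^k) atTop (𝓝 0) :=
              tendsto_pow_atTop_nhds_zero_of_lt_one (by norm_num) (by norm_num)
            simpa using h3.const_mul 2
          filter_upwards [h2.eventually_lt_const hε', eventually_ge_atTop m] with k hk1 hk2
          intro ω hω
          rw [dist_comm]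
          exact lt_of_le_of_lt (hrate m ω hω k hk2) hk1
        exact hunif.continuousOn (Filter.Eventually.of_forall
          (fun k => (hYc (n k)).continuousOn)).frequently
      · -- X = Z quasi-surely
        refine le_antisymm (iSup₂_le fun P hP => ?_) (zero_le)
        haveI := hPsprob P hP
        set s : ℕ → Set Ω := fun k => {ω | (2⁻¹:ℝ)^k < ‖X ω - Y (n k) ω‖} with hs_def
        have hsbound : ∀ k, P (s k) ≤ (2⁻¹:ℝ≥0∞)^k := by
          intro k
          have h1 := meas_lt_le_supLpNorm_div_rpow hp0 hP
            (measurable_norm_sub_of_continuous hX (hYc (n k)))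
            (t := (2⁻¹:ℝ)^k) (pow_pos (by norm_num) k)
          refine le_trans h1 ?_
          have h2 : supLpNorm Ps p (fun ω => X ω - Y (n k) ω) / ENNReal.ofReal ((2⁻¹:ℝ)^k)
              ≤ (2⁻¹:ℝ≥0∞)^k := by
            rw [hofReal k]
            refine ENNReal.div_le_of_le_mul ?_
            calc supLpNorm Ps p (fun ω => X ω - Y (n k) ω) ≤ (2⁻¹:ℝ≥0∞)^(2*k) := hn k
              _ = (2⁻¹:ℝ≥0∞)^k * (2⁻¹:ℝ≥0∞)^k := by rw [two_mul, pow_add]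
          calc (supLpNorm Ps p (fun ω => X ω - Y (n k) ω) / ENNReal.ofReal ((2⁻¹:ℝ)^k)) ^ p
              ≤ ((2⁻¹:ℝ≥0∞)^k) ^ p := ENNReal.rpow_le_rpow h2 hp0.le
            _ ≤ (2⁻¹:ℝ≥0∞)^k := hple _ (pow_le_one' hhalflt1.le k)
        have hsum : ∑' k, P (s k) ≠ ⊤ := by
          refine (lt_of_le_of_lt (ENNReal.tsum_le_tsum hsbound) ?_).ne
          rw [ENNReal.tsum_geometric, ENNReal.one_sub_inv_two, inv_inv]
          norm_num
        have hBC : P (Filter.limsup s atTop) = 0 := measure_limsup_atTop_eq_zero hsum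
        refine le_trans (measure_mono ?_) hBC.le
        intro ω hω
        by_contra hmem
        have hev : ∀ᶠ k in atTop, ω ∉ s k := by
          rw [← Filter.not_frequently]
          intro hfreq
          exact hmem (mem_limsup_iff_frequently_mem.mpr hfreq)
        have htd : Tendsto (fun k => Y (n k) ω) atTop (𝓝 (X ω)) := by
          rw [tendsto_iff_dist_tendsto_zero]
          refine squeeze_zero' (Filter.Eventually.of_forall fun k => dist_nonneg)
            (hev.mono fun k hk => ?_)
            (tendsto_pow_atTop_nhds_zero_of_lt_one (by norm_num : (0:ℝ) ≤ 2⁻¹)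
              (by norm_num : (2⁻¹:ℝ) < 1))
          rw [hs_def] at hk
          simp only [Set.mem_setOf_eq, not_lt] at hk
          rw [dist_eq_norm, norm_sub_rev]
          exact hk
        exact hω ((hZ ω (X ω) htd).symm)
    · -- uniform integrability
      rw [ENNReal.tendsto_atTop_zero]
      intro ε hε
      set ε2 : ℝ≥0∞ := min ε 1 with hε2_def
      have hε2pos : 0 < ε2 := lt_min hε zero_lt_one
      have hε2le : ε2 ≤ 1 := min_le_right _ _
      have hε2top : ε2 ≠ ⊤ := (lt_of_le_of_lt hε2le ENNReal.one_lt_top).ne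
      have h2p0 : ((2:ℝ≥0∞) ^ p) ≠ 0 := (ENNReal.rpow_pos (by norm_num) (by norm_num)).ne'
      set η : ℝ≥0∞ := (ε2 / (2:ℝ≥0∞)^p) ^ (1/p) with hη_def
      have hbase0 : 0 < ε2 / (2:ℝ≥0∞)^p := ENNReal.div_pos hε2pos.ne' h2top
      have hbasetop : ε2 / (2:ℝ≥0∞)^p ≠ ⊤ := by
        exact (ENNReal.div_lt_top hε2top h2p0).ne
      have hη0 : 0 < η := ENNReal.rpow_pos hbase0 hbasetop
      obtain ⟨k, hk⟩ := (hYlim.eventually_lt_const hη0).exists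
      obtain ⟨C, hC⟩ := hYb k
      have hC0 : 0 ≤ C := le_trans (norm_nonneg _) (hC (Classical.arbitrary Ω))
      refine ⟨⌈2*C⌉₊, fun N hN => ?_⟩
      have h2CN : 2*C ≤ (N:ℝ) := by
        calc 2*C ≤ (⌈2*C⌉₊ : ℝ) := Nat.le_ceil _
          _ ≤ (N:ℝ) := by exact_mod_cast hN
      refine le_trans (iSup₂_le fun P hP => ?_) (min_le_left ε 1)
      haveI := hPsprob P hP
      set A : Set Ω := {ω | (N:ℝ) < ‖X ω‖} with hA_def
      have hA : MeasurableSet A := measurableSet_lt measurable_const hX.norm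
      have hpoint : ∀ ω ∈ A, (‖X ω‖₊ : ℝ≥0∞) ^ p
          ≤ (2:ℝ≥0∞)^p * (‖X ω - Y k ω‖₊ : ℝ≥0∞) ^ p := by
        intro ω hω
        have hω' : (N:ℝ) < ‖X ω‖ := hω
        have h1 : ‖X ω‖ ≤ 2 * ‖X ω - Y k ω‖ := by
          have h2 : ‖X ω‖ - ‖Y k ω‖ ≤ ‖X ω - Y k ω‖ := norm_sub_norm_le _ _
          have h3 : ‖Y k ω‖ ≤ C := hC ω
          nlinarith [norm_nonneg (X ω)]
        have h2 : (‖X ω‖₊ : ℝ≥0∞) ≤ 2 * (‖X ω - Y k ω‖₊ : ℝ≥0∞) := by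
          rw [← ofReal_norm_eq_coe_nnnorm, ← ofReal_norm_eq_coe_nnnorm]
          calc ENNReal.ofReal ‖X ω‖ ≤ ENNReal.ofReal (2 * ‖X ω - Y k ω‖) :=
                ENNReal.ofReal_le_ofReal h1
            _ = 2 * ENNReal.ofReal ‖X ω - Y k ω‖ := by
                rw [ENNReal.ofReal_mul (by norm_num)]
                norm_num
        calc (‖X ω‖₊ : ℝ≥0∞) ^ p ≤ (2 * (‖X ω - Y k ω‖₊ : ℝ≥0∞)) ^ p :=
              ENNReal.rpow_le_rpow h2 hp0.le
          _ = (2:ℝ≥0∞)^p * (‖X ω - Y k ω‖₊ : ℝ≥0∞) ^ p :=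
              ENNReal.mul_rpow_of_nonneg _ _ hp0.le
      calc ∫⁻ ω in A, (‖X ω‖₊ : ℝ≥0∞) ^ p ∂P
          ≤ ∫⁻ ω in A, (2:ℝ≥0∞)^p * (‖X ω - Y k ω‖₊ : ℝ≥0∞) ^ p ∂P := by
            refine lintegral_mono_ae ?_
            filter_upwards [ae_restrict_mem hA] with ω hω
            exact hpoint ω hω
        _ ≤ ∫⁻ ω, (2:ℝ≥0∞)^p * (‖X ω - Y k ω‖₊ : ℝ≥0∞) ^ p ∂P :=
            setLIntegral_le_lintegral _ _
        _ = (2:ℝ≥0∞)^p * ∫⁻ ω, (‖X ω - Y k ω‖₊ : ℝ≥0∞) ^ p ∂P :=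
            lintegral_const_mul' _ _ h2top
        _ ≤ (2:ℝ≥0∞)^p * η ^ p := by
            refine mul_le_mul_right ?_ _
            refine le_trans (lintegral_le_supLpNorm_rpow hp0 hP _) ?_
            exact ENNReal.rpow_le_rpow hk.le hp0.le
        _ = ε2 := by
            rw [hη_def, ← ENNReal.rpow_mul, one_div, inv_mul_cancel₀ hp0', ENNReal.rpow_one]
            exact ENNReal.mul_div_cancel h2p0 h2top
  · rintro ⟨hfin, ⟨Z, hZqc, hZcap⟩, hUI⟩
    have hp0' : p ≠ 0 := hp0.ne'
    -- the key one-step approximation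
    have approx : ∀ ε : ℝ≥0∞, 0 < ε → ∃ g : Ω → E, Continuous g ∧ (∃ Cb : ℝ, ∀ ω, ‖g ω‖ ≤ Cb) ∧
        supLpNorm Ps p (fun ω => X ω - g ω) ≤ ε := by
      intro ε hε
      set ε' : ℝ≥0∞ := min ε 1 with hε'_def
      have hε'pos : 0 < ε' := lt_min hε zero_lt_one
      have hε'le : ε' ≤ 1 := min_le_right _ _
      have hε'top : ε' ≠ ⊤ := (lt_of_le_of_lt hε'le ENNReal.one_lt_top).ne
      set εp : ℝ≥0∞ := ε' ^ p with hεp_def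
      have hεp0 : εp ≠ 0 := (ENNReal.rpow_pos hε'pos hε'top).ne'
      have hεptop : εp ≠ ⊤ := ENNReal.rpow_ne_top_of_nonneg hp0.le hε'top
      have h2top : ((2:ℝ≥0∞) ^ p) ≠ ⊤ := ENNReal.rpow_ne_top_of_nonneg hp0.le (by norm_num)
      set K : ℝ≥0∞ := 1 + (2:ℝ≥0∞) ^ p * 2 with hK_def
      have hK0 : K ≠ 0 := by simp [hK_def]
      have hKtop : K ≠ ⊤ := by
        rw [hK_def]
        exact ENNReal.add_ne_top.mpr ⟨by norm_num, ENNReal.mul_ne_top h2top (by norm_num)⟩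
      set δ : ℝ≥0∞ := εp / (K * 2) with hδ_def
      have hK2 : K * 2 ≠ 0 := by simp [hK0]
      have hK2top : K * 2 ≠ ⊤ := ENNReal.mul_ne_top hKtop (by norm_num)
      have hδ0 : 0 < δ := ENNReal.div_pos hεp0 hK2top
      have hδtop : δ ≠ ⊤ := by
        rw [hδ_def]
        exact (ENNReal.div_lt_top hεptop hK2).ne
      obtain ⟨n₀, hn₀1, hn₀⟩ : ∃ n₀ : ℕ, 1 ≤ n₀ ∧
          (⨆ P ∈ Ps, ∫⁻ ω in {ω | (n₀ : ℝ) < ‖X ω‖}, (‖X ω‖₊ : ℝ≥0∞) ^ p ∂P) < δ := by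
        obtain ⟨n₀, h1, h2⟩ := ((hUI.eventually_lt_const hδ0).and (eventually_ge_atTop 1)).exists
        exact ⟨n₀, h2, h1⟩
      set nR : ℝ := (n₀ : ℝ) with hnR_def
      have hnR1 : (1:ℝ) ≤ nR := by rw [hnR_def]; exact_mod_cast hn₀1
      have hnRpos : (0:ℝ) < nR := lt_of_lt_of_le zero_lt_one hnR1
      set nP : ℝ≥0∞ := ENNReal.ofReal nR ^ p with hnP_def
      have hnP1 : 1 ≤ nP := by
        rw [hnP_def, ← ENNReal.one_rpow p]
        exact ENNReal.rpow_le_rpow (by simpa using ENNReal.ofReal_le_ofReal hnR1) hp0.le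
      have hnP0 : nP ≠ 0 := by positivity
      have hnPtop : nP ≠ ⊤ := ENNReal.rpow_ne_top_of_nonneg hp0.le ENNReal.ofReal_ne_top
      set δ' : ℝ≥0∞ := δ / nP with hδ'_def
      have hδ'0 : 0 < δ' := ENNReal.div_pos hδ0.ne' hnPtop
      obtain ⟨O, hOopen, hOcap, hZcont⟩ := hZqc δ' hδ'0
      obtain ⟨P₀, hP₀⟩ := hPsne
      haveI := hPsprob P₀ hP₀
      have hδ'lt1 : δ' < 1 := by
        have h1 : δ' ≤ δ := by
          rw [hδ'_def]
          exact ENNReal.div_le_of_le_mul (le_mul_of_one_le_right (zero_le) hnP1)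
        have h2 : δ ≤ εp / 2 := by
          rw [hδ_def]
          refine ENNReal.div_le_div le_rfl ?_
          exact le_mul_of_one_le_left (zero_le) (by simp [hK_def])
        have h3 : εp / 2 ≤ 2⁻¹ := by
          have hεple : εp ≤ 1 := by
            rw [hεp_def, ← ENNReal.one_rpow p]
            exact ENNReal.rpow_le_rpow hε'le hp0.le
          calc εp / 2 ≤ 1 / 2 := ENNReal.div_le_div hεple le_rfl
            _ = 2⁻¹ := one_div 2
        calc δ' ≤ 2⁻¹ := le_trans h1 (le_trans h2 h3)
          _ < 1 := by norm_num
      have hOne : Oᶜ.Nonempty := by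
        rw [Set.nonempty_compl]
        intro hO
        have h1 : (1:ℝ≥0∞) ≤ capacity Ps O := by
          have : P₀ O = 1 := by rw [hO]; simp
          calc (1:ℝ≥0∞) = P₀ O := this.symm
            _ ≤ capacity Ps O := le_iSup₂ (f := fun (P : Measure Ω) (_ : P ∈ Ps) => P O) P₀ hP₀
        exact absurd (lt_of_lt_of_le (lt_of_lt_of_le hOcap hδ'lt1.le) h1) (lt_irrefl _)
      -- truncation
      set tr : E → E := fun x => (nR / max nR ‖x‖) • x with htr_def
      have htrcont : Continuous tr := by
        refine Continuous.smul ?_ continuous_id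
        exact continuous_const.div (continuous_const.max continuous_norm)
          (fun x => (lt_of_lt_of_le hnRpos (le_max_left _ _)).ne')
      have htrnorm : ∀ x : E, ‖tr x‖ ≤ nR := by
        intro x
        have hM : (0:ℝ) < max nR ‖x‖ := lt_of_lt_of_le hnRpos (le_max_left _ _)
        rw [htr_def]
        simp only
        rw [norm_smul, Real.norm_eq_abs, abs_of_nonneg (div_nonneg hnRpos.le hM.le)]
        rw [div_mul_eq_mul_div, div_le_iff₀ hM]
        exact mul_le_mul_of_nonneg_left (le_max_right _ _) hnRpos.le
      have htreq : ∀ x : E, ‖x‖ ≤ nR → tr x = x := by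
        intro x hx
        rw [htr_def]
        simp only
        rw [max_eq_left hx, div_self hnRpos.ne', one_smul]
      have htrdiff : ∀ x : E, ‖x - tr x‖ ≤ if nR < ‖x‖ then ‖x‖ else 0 := by
        intro x
        by_cases hx : nR < ‖x‖
        · rw [if_pos hx]
          have hxpos : (0:ℝ) < ‖x‖ := lt_trans hnRpos hx
          have h1 : tr x = (nR / ‖x‖) • x := by rw [htr_def]; simp only; rw [max_eq_right hx.le]
          have h2 : x - tr x = (1 - nR / ‖x‖) • x := by
            rw [h1, sub_smul, one_smul]
          rw [h2, norm_smul, Real.norm_eq_abs]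
          have h3 : (0:ℝ) ≤ 1 - nR / ‖x‖ := by
            rw [sub_nonneg, div_le_one hxpos]
            exact hx.le
          rw [abs_of_nonneg h3]
          refine mul_le_of_le_one_left (norm_nonneg _) ?_
          have : 0 ≤ nR / ‖x‖ := div_nonneg hnRpos.le hxpos.le
          linarith
        · rw [if_neg hx, htreq x (not_lt.mp hx), sub_self, norm_zero]
      set W : Ω → E := fun ω => tr (Z ω) with hW_def
      have hWcont : ContinuousOn W Oᶜ := htrcont.comp_continuousOn hZcont
      have hWb : ∀ ω, ‖W ω‖ ≤ nR := fun ω => htrnorm _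
      obtain ⟨g, hgcont, hgb, hgC⟩ := exists_bounded_extension hOopen.isClosed_compl hOne
        W hWcont hnRpos hWb
      refine ⟨g, hgcont, ⟨nR, hgb⟩, ?_⟩
      -- the estimate
      set A : Set Ω := {ω | nR < ‖X ω‖} with hA_def
      have hA : MeasurableSet A := measurableSet_lt measurable_const hX.norm
      set I : Ω → ℝ≥0∞ := A.indicator (fun ω => (‖X ω‖₊ : ℝ≥0∞) ^ p) with hI_def
      have hImeas : Measurable I := (hX.enorm.pow_const p).indicator hA
      have key : ∀ P ∈ Ps, ∫⁻ ω, (‖X ω - g ω‖₊ : ℝ≥0∞) ^ p ∂P ≤ εp := by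
        intro P hP
        haveI := hPsprob P hP
        have hae : ∀ᵐ ω ∂P, X ω = Z ω := by
          have h0 : P {ω | X ω ≠ Z ω} = 0 := by
            refine le_antisymm ?_ (zero_le)
            calc P {ω | X ω ≠ Z ω}
                ≤ capacity Ps {ω | X ω ≠ Z ω} :=
                  le_iSup₂ (f := fun (P : Measure Ω) (_ : P ∈ Ps) => P {ω | X ω ≠ Z ω}) P hP
              _ = 0 := hZcap
          rw [ae_iff]
          exact h0
        have hIA : ∫⁻ ω, I ω ∂P ≤ δ := by
          rw [hI_def, lintegral_indicator hA]
          refine le_trans ?_ hn₀.le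
          exact le_iSup₂ (f := fun (P : Measure Ω) (_ : P ∈ Ps) =>
            ∫⁻ ω in {ω | (n₀ : ℝ) < ‖X ω‖}, (‖X ω‖₊ : ℝ≥0∞) ^ p ∂P) P hP
        have hO_bound : ∫⁻ ω in O, (‖X ω - g ω‖₊ : ℝ≥0∞) ^ p ∂P ≤ (2:ℝ≥0∞)^p * (δ + δ) := by
          have hpoint : ∀ ω, (‖X ω - g ω‖₊ : ℝ≥0∞) ^ p ≤ (2:ℝ≥0∞)^p * (I ω + nP) := by
            intro ω
            by_cases hω : nR < ‖X ω‖
            · have h1 : ‖X ω - g ω‖ ≤ 2 * ‖X ω‖ := by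
                calc ‖X ω - g ω‖ ≤ ‖X ω‖ + ‖g ω‖ := norm_sub_le _ _
                  _ ≤ ‖X ω‖ + nR := by linarith [hgb ω]
                  _ ≤ 2 * ‖X ω‖ := by linarith
              have h2 : (‖X ω - g ω‖₊ : ℝ≥0∞) ≤ 2 * (‖X ω‖₊ : ℝ≥0∞) := by
                rw [← ofReal_norm_eq_coe_nnnorm, ← ofReal_norm_eq_coe_nnnorm]
                calc ENNReal.ofReal ‖X ω - g ω‖ ≤ ENNReal.ofReal (2 * ‖X ω‖) :=
                      ENNReal.ofReal_le_ofReal h1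
                  _ = 2 * ENNReal.ofReal ‖X ω‖ := by
                      rw [ENNReal.ofReal_mul (by norm_num)]
                      norm_num
              calc (‖X ω - g ω‖₊ : ℝ≥0∞) ^ p ≤ (2 * (‖X ω‖₊ : ℝ≥0∞)) ^ p :=
                    ENNReal.rpow_le_rpow h2 hp0.le
                _ = (2:ℝ≥0∞)^p * (‖X ω‖₊ : ℝ≥0∞) ^ p :=
                    ENNReal.mul_rpow_of_nonneg _ _ hp0.le
                _ ≤ (2:ℝ≥0∞)^p * (I ω + nP) := by
                    refine mul_le_mul_right ?_ _
                    rw [hI_def, Set.indicator_of_mem (show ω ∈ A from hω)]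
                    exact le_add_right le_rfl
            · have h1 : ‖X ω - g ω‖ ≤ 2 * nR := by
                calc ‖X ω - g ω‖ ≤ ‖X ω‖ + ‖g ω‖ := norm_sub_le _ _
                  _ ≤ nR + nR := add_le_add (not_lt.mp hω) (hgb ω)
                  _ = 2 * nR := by ring
              have h2 : (‖X ω - g ω‖₊ : ℝ≥0∞) ≤ 2 * ENNReal.ofReal nR := by
                rw [← ofReal_norm_eq_coe_nnnorm]
                calc ENNReal.ofReal ‖X ω - g ω‖ ≤ ENNReal.ofReal (2 * nR) :=
                      ENNReal.ofReal_le_ofReal h1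
                  _ = 2 * ENNReal.ofReal nR := by
                      rw [ENNReal.ofReal_mul (by norm_num)]
                      norm_num
              calc (‖X ω - g ω‖₊ : ℝ≥0∞) ^ p ≤ (2 * ENNReal.ofReal nR) ^ p :=
                    ENNReal.rpow_le_rpow h2 hp0.le
                _ = (2:ℝ≥0∞)^p * nP :=
                    ENNReal.mul_rpow_of_nonneg _ _ hp0.le
                _ ≤ (2:ℝ≥0∞)^p * (I ω + nP) := by
                    refine mul_le_mul_right ?_ _
                    exact le_add_left le_rfl
          calc ∫⁻ ω in O, (‖X ω - g ω‖₊ : ℝ≥0∞) ^ p ∂P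
              ≤ ∫⁻ ω in O, (2:ℝ≥0∞)^p * (I ω + nP) ∂P := lintegral_mono hpoint
            _ = (2:ℝ≥0∞)^p * ∫⁻ ω in O, (I ω + nP) ∂P := lintegral_const_mul' _ _ h2top
            _ = (2:ℝ≥0∞)^p * ((∫⁻ ω in O, I ω ∂P) + nP * P O) := by
                rw [lintegral_add_right' _ aemeasurable_const, setLIntegral_const]
            _ ≤ (2:ℝ≥0∞)^p * (δ + δ) := by
                refine mul_le_mul_right (add_le_add ?_ ?_) _
                · exact le_trans (setLIntegral_le_lintegral _ _) hIA
                · have hPO : P O ≤ δ' := by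
                    refine le_trans ?_ hOcap.le
                    exact le_iSup₂ (f := fun (P : Measure Ω) (_ : P ∈ Ps) => P O) P hP
                  calc nP * P O ≤ nP * (δ / nP) := mul_le_mul_right hPO _
                    _ ≤ δ := ENNReal.mul_div_le
        have hOc_bound : ∫⁻ ω in Oᶜ, (‖X ω - g ω‖₊ : ℝ≥0∞) ^ p ∂P ≤ δ := by
          have hptwise : ∀ᵐ ω ∂(P.restrict Oᶜ), (‖X ω - g ω‖₊ : ℝ≥0∞) ^ p ≤ I ω := by
            filter_upwards [ae_restrict_of_ae hae,
              ae_restrict_mem hOopen.isClosed_compl.measurableSet] with ω hXZ hωC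
            have hg : g ω = tr (Z ω) := hgC ω hωC
            have hd : ‖X ω - g ω‖ ≤ if nR < ‖X ω‖ then ‖X ω‖ else 0 := by
              rw [hg, hXZ]
              exact htrdiff (Z ω)
            by_cases hω : nR < ‖X ω‖
            · rw [if_pos hω] at hd
              rw [hI_def, Set.indicator_of_mem (show ω ∈ A from hω)]
              refine ENNReal.rpow_le_rpow ?_ hp0.le
              rw [← ofReal_norm_eq_coe_nnnorm, ← ofReal_norm_eq_coe_nnnorm]
              exact ENNReal.ofReal_le_ofReal hd
            · rw [if_neg hω] at hd
              have : ‖X ω - g ω‖ = 0 := le_antisymm hd (norm_nonneg _)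
              rw [← ofReal_norm_eq_coe_nnnorm, this]
              simp [ENNReal.zero_rpow_of_pos hp0]
          calc ∫⁻ ω in Oᶜ, (‖X ω - g ω‖₊ : ℝ≥0∞) ^ p ∂P
              ≤ ∫⁻ ω in Oᶜ, I ω ∂P := lintegral_mono_ae hptwise
            _ ≤ ∫⁻ ω, I ω ∂P := setLIntegral_le_lintegral _ _
            _ ≤ δ := hIA
        calc ∫⁻ ω, (‖X ω - g ω‖₊ : ℝ≥0∞) ^ p ∂P
            = (∫⁻ ω in O, (‖X ω - g ω‖₊ : ℝ≥0∞) ^ p ∂P)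
              + ∫⁻ ω in Oᶜ, (‖X ω - g ω‖₊ : ℝ≥0∞) ^ p ∂P :=
              (lintegral_add_compl _ hOopen.measurableSet).symm
          _ ≤ (2:ℝ≥0∞)^p * (δ + δ) + δ := add_le_add hO_bound hOc_bound
          _ = δ * K := by rw [hK_def]; ring
          _ ≤ εp := by
              rw [hδ_def]
              calc εp / (K * 2) * K = εp * (K * 2)⁻¹ * K := by rw [ENNReal.div_eq_inv_mul]; ring
                _ = εp * 2⁻¹ * (K⁻¹ * K) := by
                    rw [ENNReal.mul_inv (Or.inl hK0) (Or.inl hKtop)]; ring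
                _ = εp * 2⁻¹ := by rw [ENNReal.inv_mul_cancel hK0 hKtop, mul_one]
                _ ≤ εp := by
                    refine mul_le_of_le_one_right' ?_
                    norm_num
      refine le_trans (iSup₂_le fun P hP => ?_) (min_le_left ε 1)
      calc (∫⁻ ω, (‖X ω - g ω‖₊ : ℝ≥0∞) ^ p ∂P) ^ (1/p) ≤ εp ^ (1/p) :=
            ENNReal.rpow_le_rpow (key P hP) (by positivity)
        _ = ε' := by
            rw [hεp_def, ← ENNReal.rpow_mul, mul_one_div, div_self hp0', ENNReal.rpow_one]
    have hsel : ∀ j : ℕ, ∃ g : Ω → E, Continuous g ∧ (∃ Cb : ℝ, ∀ ω, ‖g ω‖ ≤ Cb) ∧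
        supLpNorm Ps p (fun ω => X ω - g ω) ≤ (2⁻¹ : ℝ≥0∞) ^ j := by
      intro j
      refine approx _ (ENNReal.pow_pos ?_ j)
      simp [ENNReal.inv_pos]
    refine ⟨fun j => (hsel j).choose, fun j => (hsel j).choose_spec.1,
      fun j => (hsel j).choose_spec.2.1, ?_⟩
    refine tendsto_of_tendsto_of_tendsto_of_le_of_le tendsto_const_nhds
      (ENNReal.tendsto_pow_atTop_nhds_zero_of_lt_one ?_)
      (fun j => zero_le) (fun j => (hsel j).choose_spec.2.2)
    exact ENNReal.inv_lt_one.mpr ENNReal.one_lt_two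

end
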